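/- Let (ȳ, λ̄) ∈ ℝⁿ × ℝⁿ satisfy Aȳ + BR⁻¹Bᵀλ̄ = −B u_d and Qȳ − Aᵀλ̄ = Q y_d. Let P be a symmetric positive definite solution of the ARE and N a symmetric negative definite solution of the ARE; set A₋ = A − BR⁻¹BᵀP, A₊ = A − BR⁻¹BᵀN, and assume ‖exp(tA₋)‖ ≤ M e^{−νt} and ‖exp(−tA₊)‖ ≤ M e^{−νt} for all t ≥ 0, for some M ≥ 1, ν > 0. Then for all y₀, y₁ ∈ ℝⁿ there exist C > 0 and T₁ > 0 such that for every T ≥ T₁, every pair of differentiable functions (y, λ) : [0, T] → ℝⁿ × ℝⁿ solving ẏ = Ay + BR⁻¹Bᵀλ + B u_d, λ̇ = Qy − Aᵀλ − Q y_d with y(0) = y₀ and y(T) = y₁ satisfies, for every t ∈ [0, T], with w₀ = (y₀ − ȳ) − exp(−TA₊)(y₁ − ȳ) and v_T = (y₁ − ȳ) − exp(TA₋)(y₀ − ȳ): ‖y(t) − ȳ − exp(tA₋) w₀ − exp(−(T − t)A₊) v_T‖ ≤ C e^{−2νT}(e^{−νt} + e^{−ν(T−t)}) and ‖λ(t) −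 λ̄ + P exp(tA₋) w₀ + N exp(−(T − t)A₊) v_T‖ ≤ C e^{−2νT}(e^{−νt} + e^{−ν(T−t)}). -/

import Mathlib

open Matrix

/-- The Euclidean norm of a vector of `ℝⁿ`. -/
noncomputable def enorm18 {n : ℕ} (x : Fin n → ℝ) : ℝ := Real.sqrt (x ⬝ᵥ x)

open Matrix Set

section Aux

variable {n : ℕ}

lemma enorm18_eq (x : Fin n → ℝ) :
    enorm18 x = ‖(WithLp.equiv 2 (Fin n → ℝ)).symm x‖ := by
  rw [EuclideanSpace.norm_eq]
  simp only [enorm18, dotProduct, Real.norm_eq_abs, sq_abs, WithLp.equiv_symm_apply, WithLp.ofLp_toLp]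
  congr 1
  exact Finset.sum_congr rfl fun i _ => by rw [sq]

lemma enorm18_nonneg (x : Fin n → ℝ) : 0 ≤ enorm18 x := Real.sqrt_nonneg _

lemma enorm18_add_le (x y : Fin n → ℝ) : enorm18 (x + y) ≤ enorm18 x + enorm18 y := by
  simp only [enorm18_eq]
  rw [show (WithLp.equiv 2 (Fin n → ℝ)).symm (x + y)
      = (WithLp.equiv 2 (Fin n → ℝ)).symm x + (WithLp.equiv 2 (Fin n → ℝ)).symm y from rfl]
  exact norm_add_le _ _

lemma enorm18_neg (x : Fin n → ℝ) : enorm18 (-x) = enorm18 x := by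
  simp only [enorm18_eq]
  rw [show (WithLp.equiv 2 (Fin n → ℝ)).symm (-x) = -(WithLp.equiv 2 (Fin n → ℝ)).symm x from rfl]
  exact norm_neg _

set_option synthInstance.maxHeartbeats 1000000 in
set_option maxHeartbeats 1000000 in
lemma exists_opBound18 (Y : Matrix (Fin n) (Fin n) ℝ) :
    ∃ c : ℝ, 0 ≤ c ∧ ∀ x : Fin n → ℝ, enorm18 (Y.mulVec x) ≤ c * enorm18 x := by
  let e := WithLp.linearEquiv 2 ℝ (Fin n → ℝ)
  let L : EuclideanSpace ℝ (Fin n) →ₗ[ℝ] EuclideanSpace ℝ (Fin n) :=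
    (e.symm.toLinearMap.comp Y.mulVecLin).comp e.toLinearMap
  set cl := LinearMap.toContinuousLinearMap L with hcl
  refine ⟨‖cl‖, norm_nonneg _, fun x => ?_⟩
  have h := cl.le_opNorm ((WithLp.equiv 2 (Fin n → ℝ)).symm x)
  simpa [enorm18_eq, hcl, L, e, LinearMap.toContinuousLinearMap] using h

section ExpDeriv

attribute [local instance] Matrix.linftyOpNormedAddCommGroup Matrix.linftyOpNormedRing
  Matrix.linftyOpNormedAlgebra

lemma hasDerivAt_expMulVec18 (Y : Matrix (Fin n) (Fin n) ℝ) (c : Fin n → ℝ) (t : ℝ) :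
    HasDerivAt (fun u : ℝ => (NormedSpace.exp (u • Y)).mulVec c)
      (Y.mulVec ((NormedSpace.exp (t • Y)).mulVec c)) t := by
  have h1 := hasDerivAt_exp_smul_const' (𝕂 := ℝ) Y t
  let L : Matrix (Fin n) (Fin n) ℝ →ₗ[ℝ] (Fin n → ℝ) :=
    { toFun := fun M => M.mulVec c,
      map_add' := fun M N => Matrix.add_mulVec M N c,
      map_smul' := fun r M => Matrix.smul_mulVec r M c }
  have h2 := (L.toContinuousLinearMap.hasFDerivAt).comp_hasDerivAt t h1
  rw [Matrix.mulVec_mulVec]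
  exact h2

set_option synthInstance.maxHeartbeats 1000000 in
set_option maxHeartbeats 1000000 in
lemma linear_ode_exact18 (Y : Matrix (Fin n) (Fin n) ℝ) {T : ℝ} (hT : 0 < T)
    (f : ℝ → Fin n → ℝ)
    (hf : ∀ t ∈ Set.Icc (0:ℝ) T, HasDerivWithinAt f (Y.mulVec (f t)) (Set.Icc 0 T) t) :
    ∀ t ∈ Set.Icc (0:ℝ) T, f t = (NormedSpace.exp (t • Y)).mulVec (f 0) := by
  set g : ℝ → Fin n → ℝ := fun u => (NormedSpace.exp (u • Y)).mulVec (f 0) with hgdef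
  have hg' : ∀ t : ℝ, HasDerivAt g (Y.mulVec (g t)) t := fun t => hasDerivAt_expMulVec18 Y (f 0) t
  set cl := LinearMap.toContinuousLinearMap (Y.mulVecLin) with hcl
  have hL : ∀ t : ℝ, LipschitzOnWith ‖cl‖₊ (fun x : Fin n → ℝ => Y.mulVec x) univ := by
    intro t
    have := cl.lipschitz.lipschitzOnWith (s := (univ : Set (Fin n → ℝ)))
    exact this
  have hfc : ContinuousOn f (Icc 0 T) := fun t ht => (hf t ht).continuousWithinAt
  have hgc : ContinuousOn g (Icc 0 T) := fun t _ => (hg' t).continuousAt.continuousWithinAt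
  have hf' : ∀ t ∈ Ico (0:ℝ) T, HasDerivWithinAt f (Y.mulVec (f t)) (Ici t) t := by
    intro t ht
    have h := hf t (Ico_subset_Icc_self ht)
    apply h.mono_of_mem_nhdsWithin
    rw [mem_nhdsWithin]
    refine ⟨Ioo (t - 1) T, isOpen_Ioo, ⟨by linarith [ht.1], ht.2⟩, ?_⟩
    rintro x ⟨⟨_, hx2⟩, hx3⟩
    exact ⟨le_trans ht.1 hx3, le_of_lt hx2⟩
  have heq := ODE_solution_unique_of_mem_Icc_right
    (v := fun _ x => Y.mulVec x) (s := fun _ => univ) (fun t _ => hL t)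
    hfc hf' (fun _ _ => mem_univ _) hgc
    (fun t _ => ((hg' t).hasDerivWithinAt))
    (fun _ _ => mem_univ _)
    (by simp [hgdef, NormedSpace.exp_zero, Matrix.one_mulVec])
  exact fun t ht => heq ht

end ExpDeriv

lemma exp_intertwine18 (X Y D : Matrix (Fin n) (Fin n) ℝ) (hD : IsUnit D.det)
    (h : X * D = D * Y) :
    NormedSpace.exp X * D = D * NormedSpace.exp Y := by
  have hU : IsUnit D := (Matrix.isUnit_iff_isUnit_det D).mpr hD
  have hXD : X = D * Y * D⁻¹ := by
    have h2 : X * D * D⁻¹ = D * Y * D⁻¹ := by rw [h]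
    rwa [Matrix.mul_assoc, Matrix.mul_nonsing_inv _ hD, Matrix.mul_one] at h2
  rw [hXD, Matrix.exp_conj D Y hU, Matrix.mul_assoc, Matrix.nonsing_inv_mul _ hD,
    Matrix.mul_one]

lemma inv_intertwine18 (E F D : Matrix (Fin n) (Fin n) ℝ) (hD : IsUnit D.det)
    (h : E * D = D * F) : D⁻¹ * E = F * D⁻¹ := by
  have h2 : D⁻¹ * (E * D) * D⁻¹ = D⁻¹ * (D * F) * D⁻¹ := by rw [h]
  calc D⁻¹ * E = D⁻¹ * E * (D * D⁻¹) := by rw [Matrix.mul_nonsing_inv _ hD, Matrix.mul_one]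
    _ = D⁻¹ * (E * D) * D⁻¹ := by simp only [Matrix.mul_assoc]
    _ = D⁻¹ * (D * F) * D⁻¹ := h2
    _ = (D⁻¹ * D) * (F * D⁻¹) := by simp only [Matrix.mul_assoc]
    _ = F * D⁻¹ := by rw [Matrix.nonsing_inv_mul _ hD, Matrix.one_mul]

lemma exp_smul_add18 (X : Matrix (Fin n) (Fin n) ℝ) (a b : ℝ) :
    NormedSpace.exp ((a + b) • X)
      = NormedSpace.exp (a • X) * NormedSpace.exp (b • X) := by
  rw [add_smul]
  exact Matrix.exp_add_of_commute _ _ (((Commute.refl X).smul_left a).smul_right b)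

end Aux

set_option maxHeartbeats 4000000 in
set_option synthInstance.maxHeartbeats 1000000 in
/-- expansion of the solutions of the extremal (Hamiltonian) system in the
scale `e^{TA₋}`, `e^{−TA₊}`: with `w₀ = (y₀−ȳ) − e^{−TA₊}(y₁−ȳ)` and
`v_T = (y₁−ȳ) − e^{TA₋}(y₀−ȳ)`, the solution `(y, λ)` of the extremal system with
`y(0) = y₀`, `y(T) = y₁` satisfies the stated `O(e^{−2νT}(e^{−νt}+e^{−ν(T−t)}))` bounds. -/
theorem extremal_system_expansion
    (n m : ℕ) (hn : 1 ≤ n) (hm : 1 ≤ m)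
    (A : Matrix (Fin n) (Fin n) ℝ) (B : Matrix (Fin n) (Fin m) ℝ)
    (Q : Matrix (Fin n) (Fin n) ℝ) (hQ : Q.PosDef)
    (R : Matrix (Fin m) (Fin m) ℝ) (hR : R.PosDef)
    (yd : Fin n → ℝ) (ud : Fin m → ℝ)
    (ybar lambdabar : Fin n → ℝ)
    (hstatic1 : A.mulVec ybar + (B * R⁻¹ * Bᵀ).mulVec lambdabar = -(B.mulVec ud))
    (hstatic2 : Q.mulVec ybar - Aᵀ.mulVec lambdabar = Q.mulVec yd)
    (P : Matrix (Fin n) (Fin n) ℝ) (hP : P.PosDef)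
    (hAREP : Aᵀ * P + P * A - P * B * R⁻¹ * Bᵀ * P = -Q)
    (N : Matrix (Fin n) (Fin n) ℝ) (hN : (-N).PosDef) (hNsymm : Nᵀ = N)
    (hAREN : Aᵀ * N + N * A - N * B * R⁻¹ * Bᵀ * N = -Q)
    (M ν : ℝ) (hM : 1 ≤ M) (hν : 0 < ν)
    (hstabP : ∀ t : ℝ, 0 ≤ t → ∀ x : Fin n → ℝ,
      enorm18 ((NormedSpace.exp (t • (A - B * R⁻¹ * Bᵀ * P))).mulVec x)
        ≤ M * Real.exp (-ν * t) * enorm18 x)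
    (hstabN : ∀ t : ℝ, 0 ≤ t → ∀ x : Fin n → ℝ,
      enorm18 ((NormedSpace.exp ((-t) • (A - B * R⁻¹ * Bᵀ * N))).mulVec x)
        ≤ M * Real.exp (-ν * t) * enorm18 x) :
    ∀ y₀ y₁ : Fin n → ℝ, ∃ C : ℝ, 0 < C ∧ ∃ T₁ : ℝ, 0 < T₁ ∧
      ∀ T : ℝ, T₁ ≤ T →
      ∀ y lam : ℝ → Fin n → ℝ,
        (∀ t ∈ Set.Icc (0 : ℝ) T,
          HasDerivWithinAt y
            (A.mulVec (y t) + (B * R⁻¹ * Bᵀ).mulVec (lam t) + B.mulVec ud)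
            (Set.Icc 0 T) t) →
        (∀ t ∈ Set.Icc (0 : ℝ) T,
          HasDerivWithinAt lam
            (Q.mulVec (y t) - Aᵀ.mulVec (lam t) - Q.mulVec yd)
            (Set.Icc 0 T) t) →
        y 0 = y₀ → y T = y₁ →
        ∀ t ∈ Set.Icc (0 : ℝ) T,
          enorm18 (y t - ybar
              - (NormedSpace.exp (t • (A - B * R⁻¹ * Bᵀ * P))).mulVec
                  ((y₀ - ybar) - (NormedSpace.exp ((-T) • (A - B * R⁻¹ * Bᵀ * N))).mulVec
                    (y₁ - ybar))
              - (NormedSpace.exp ((-(T - t)) • (A - B * R⁻¹ * Bᵀ * N))).mulVec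
                  ((y₁ - ybar) - (NormedSpace.exp (T • (A - B * R⁻¹ * Bᵀ * P))).mulVec
                    (y₀ - ybar)))
            ≤ C * Real.exp (-2 * ν * T) * (Real.exp (-ν * t) + Real.exp (-ν * (T - t))) ∧
          enorm18 (lam t - lambdabar
              + P.mulVec ((NormedSpace.exp (t • (A - B * R⁻¹ * Bᵀ * P))).mulVec
                  ((y₀ - ybar) - (NormedSpace.exp ((-T) • (A - B * R⁻¹ * Bᵀ * N))).mulVec
                    (y₁ - ybar)))
              + N.mulVec ((NormedSpace.exp ((-(T - t)) • (A - B * R⁻¹ * Bᵀ * N))).mulVec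
                  ((y₁ - ybar) - (NormedSpace.exp (T • (A - B * R⁻¹ * Bᵀ * P))).mulVec
                    (y₀ - ybar))))
            ≤ C * Real.exp (-2 * ν * T) * (Real.exp (-ν * t) + Real.exp (-ν * (T - t))) := by
  intro y₀ y₁
  set S : Matrix (Fin n) (Fin n) ℝ := B * R⁻¹ * Bᵀ with hS
  set Am : Matrix (Fin n) (Fin n) ℝ := A - S * P with hAm
  set Ap : Matrix (Fin n) (Fin n) ℝ := A - S * N with hAp
  set D : Matrix (Fin n) (Fin n) ℝ := P - N with hD
  set Yz : Matrix (Fin n) (Fin n) ℝ := P * S - Aᵀ with hYz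
  set Yw : Matrix (Fin n) (Fin n) ℝ := N * S - Aᵀ with hYw
  -- algebraic preliminaries
  have hAREP' : Aᵀ * P + P * A - P * (S * P) = -Q := by
    rw [hS]; simpa [Matrix.mul_assoc] using hAREP
  have hAREN' : Aᵀ * N + N * A - N * (S * N) = -Q := by
    rw [hS]; simpa [Matrix.mul_assoc] using hAREN
  have hQeqP : Q = P * (S * P) - Aᵀ * P - P * A := by
    rw [← neg_neg Q, ← hAREP']; abel
  have hQeqN : Q = N * (S * N) - Aᵀ * N - N * A := by
    rw [← neg_neg Q, ← hAREN']; abel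
  have idz1 : Yz * P = Q + P * A := by rw [hYz, hQeqP]; noncomm_ring
  have idw1 : Yw * N = Q + N * A := by rw [hYw, hQeqN]; noncomm_ring
  have iD1 : Yz * D = D * Ap := by
    have e1 : Yz * D - D * Ap
        = (P * (S * P) - Aᵀ * P - P * A) - (N * (S * N) - Aᵀ * N - N * A) := by
      rw [hYz, hD, hAp]; noncomm_ring
    rw [← hQeqP, ← hQeqN, sub_self, sub_eq_zero] at e1
    exact e1
  have iD2 : Yw * D = D * Am := by
    have e1 : Yw * D - D * Am
        = (P * (S * P) - Aᵀ * P - P * A) - (N * (S * N) - Aᵀ * N - N * A) := by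
      rw [hYw, hD, hAm]; noncomm_ring
    rw [← hQeqP, ← hQeqN, sub_self, sub_eq_zero] at e1
    exact e1
  have hDpd : D.PosDef := by
    have := hP.add hN
    rw [hD, sub_eq_add_neg]; exact this
  have hDdet : IsUnit D.det := hDpd.det_pos.ne'.isUnit
  -- operator norm bounds
  obtain ⟨cP, hcP0, hcP⟩ := exists_opBound18 P
  obtain ⟨cN, hcN0, hcN⟩ := exists_opBound18 N
  set d₀ : Fin n → ℝ := y₀ - ybar with hd₀
  set d₁ : Fin n → ℝ := y₁ - ybar with hd₁
  set K₀ : ℝ := 2 * (enorm18 d₀ + enorm18 d₁) with hK₀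
  have hK₀0 : 0 ≤ K₀ := by
    have := enorm18_nonneg d₀; have := enorm18_nonneg d₁; positivity
  refine ⟨(1 + cP + cN) * M ^ 3 * (K₀ + 1), by positivity, max 1 (Real.log (2 * M) / ν),
    lt_of_lt_of_le one_pos (le_max_left _ _), ?_⟩
  intro T hT y lam hy hlam hy0 hyT
  have hT0 : 0 < T := lt_of_lt_of_le one_pos (le_trans (le_max_left _ _) hT)
  have hsmall : M * Real.exp (-ν * T) ≤ 1 / 2 := by
    have h2M : (0:ℝ) < 2 * M := by linarith
    have hlog : Real.log (2 * M) ≤ ν * T := by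
      have h1 : Real.log (2 * M) / ν ≤ T := le_trans (le_max_right _ _) hT
      calc Real.log (2 * M) = (Real.log (2 * M) / ν) * ν := by field_simp
        _ ≤ T * ν := by apply mul_le_mul_of_nonneg_right h1 (le_of_lt hν)
        _ = ν * T := by ring
    have hE : 2 * M ≤ Real.exp (ν * T) := by
      rw [← Real.exp_log h2M]; exact Real.exp_le_exp.mpr hlog
    have hEpos : (0:ℝ) < Real.exp (ν * T) := Real.exp_pos _
    rw [show -ν * T = -(ν * T) by ring, Real.exp_neg]
    rw [div_eq_mul_inv, mul_comm (1:ℝ)]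
    calc M * (Real.exp (ν * T))⁻¹ ≤ M * (2 * M)⁻¹ := by
          apply mul_le_mul_of_nonneg_left _ (by linarith)
          exact inv_anti₀ h2M hE
      _ ≤ 2⁻¹ * 1 := by
          rw [mul_inv, ← mul_assoc, mul_comm M 2⁻¹, mul_assoc]
          apply mul_le_mul_of_nonneg_left _ (by norm_num)
          rw [mul_inv_cancel₀]; linarith
  -- the decoupled functions
  set z : ℝ → Fin n → ℝ :=
    fun s => (lam s + P.mulVec (y s)) - (lambdabar + P.mulVec ybar) with hzdef
  set w : ℝ → Fin n → ℝ :=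
    fun s => (lam s + N.mulVec (y s)) - (lambdabar + N.mulVec ybar) with hwdef
  have hBud : B.mulVec ud = -(A.mulVec ybar + S.mulVec lambdabar) := by
    rw [hstatic1, neg_neg]
  have keyP : ∀ x : Fin n → ℝ,
      P.mulVec (S.mulVec (P.mulVec x)) = Q.mulVec x + P.mulVec (A.mulVec x)
        + Aᵀ.mulVec (P.mulVec x) := by
    intro x
    have h0 : P * S * P = Q + P * A + Aᵀ * P := by
      rw [hQeqP]; noncomm_ring
    have := congrArg (fun (M : Matrix (Fin n) (Fin n) ℝ) => M.mulVec x) h0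
    simpa [Matrix.add_mulVec, ← Matrix.mulVec_mulVec] using this
  have keyN : ∀ x : Fin n → ℝ,
      N.mulVec (S.mulVec (N.mulVec x)) = Q.mulVec x + N.mulVec (A.mulVec x)
        + Aᵀ.mulVec (N.mulVec x) := by
    intro x
    have h0 : N * S * N = Q + N * A + Aᵀ * N := by
      rw [hQeqN]; noncomm_ring
    have := congrArg (fun (M : Matrix (Fin n) (Fin n) ℝ) => M.mulVec x) h0
    simpa [Matrix.add_mulVec, ← Matrix.mulVec_mulVec] using this
  have hz' : ∀ t ∈ Set.Icc (0:ℝ) T, HasDerivWithinAt z (Yz.mulVec (z t)) (Set.Icc 0 T) t := by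
    intro t ht
    have h2 : HasDerivWithinAt (fun s => P.mulVec (y s))
        (P.mulVec (A.mulVec (y t) + S.mulVec (lam t) + B.mulVec ud)) (Set.Icc 0 T) t := by
      have := ((LinearMap.toContinuousLinearMap
        (Matrix.mulVecLin P)).hasFDerivAt).comp_hasDerivWithinAt t (hy t ht)
      exact this
    have h3 := ((hlam t ht).add h2).sub_const (lambdabar + P.mulVec ybar)
    have hid : (Q.mulVec (y t) - Aᵀ.mulVec (lam t) - Q.mulVec yd)
        + P.mulVec (A.mulVec (y t) + S.mulVec (lam t) + B.mulVec ud)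
        = Yz.mulVec (z t) := by
      rw [hzdef, hYz, ← hstatic2, hBud]
      simp only [Matrix.mulVec_add, Matrix.mulVec_sub, Matrix.mulVec_neg, Matrix.sub_mulVec,
        Matrix.add_mulVec, ← Matrix.mulVec_mulVec]
      rw [keyP (y t), keyP ybar]
      abel
    rw [← hid]
    exact h3
  have hw' : ∀ t ∈ Set.Icc (0:ℝ) T, HasDerivWithinAt w (Yw.mulVec (w t)) (Set.Icc 0 T) t := by
    intro t ht
    have h2 : HasDerivWithinAt (fun s => N.mulVec (y s))
        (N.mulVec (A.mulVec (y t) + S.mulVec (lam t) + B.mulVec ud)) (Set.Icc 0 T) t := by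
      have := ((LinearMap.toContinuousLinearMap
        (Matrix.mulVecLin N)).hasFDerivAt).comp_hasDerivWithinAt t (hy t ht)
      exact this
    have h3 := ((hlam t ht).add h2).sub_const (lambdabar + N.mulVec ybar)
    have hid : (Q.mulVec (y t) - Aᵀ.mulVec (lam t) - Q.mulVec yd)
        + N.mulVec (A.mulVec (y t) + S.mulVec (lam t) + B.mulVec ud)
        = Yw.mulVec (w t) := by
      rw [hwdef, hYw, ← hstatic2, hBud]
      simp only [Matrix.mulVec_add, Matrix.mulVec_sub, Matrix.mulVec_neg, Matrix.sub_mulVec,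
        Matrix.add_mulVec, ← Matrix.mulVec_mulVec]
      rw [keyN (y t), keyN ybar]
      abel
    rw [← hid]
    exact h3
  have hzExact := linear_ode_exact18 Yz hT0 z hz'
  have hwExact := linear_ode_exact18 Yw hT0 w hw'
  -- intertwining at matrix exponential level
  have hIz : ∀ s : ℝ, D⁻¹ * NormedSpace.exp (s • Yz) = NormedSpace.exp (s • Ap) * D⁻¹ := by
    intro s
    apply inv_intertwine18 _ _ _ hDdet
    apply exp_intertwine18 _ _ _ hDdet
    rw [smul_mul_assoc, iD1, mul_smul_comm]
  have hIw : ∀ s : ℝ, D⁻¹ * NormedSpace.exp (s • Yw) = NormedSpace.exp (s • Am) * D⁻¹ := by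
    intro s
    apply inv_intertwine18 _ _ _ hDdet
    apply exp_intertwine18 _ _ _ hDdet
    rw [smul_mul_assoc, iD2, mul_smul_comm]
  obtain ⟨ζ, hζ⟩ : ∃ v : Fin n → ℝ, v = D⁻¹.mulVec (z 0) := ⟨_, rfl⟩
  obtain ⟨ω, hω⟩ : ∃ v : Fin n → ℝ, v = D⁻¹.mulVec (w 0) := ⟨_, rfl⟩
  obtain ⟨α, hα⟩ : ∃ v : Fin n → ℝ, v = -ω := ⟨_, rfl⟩
  obtain ⟨β, hβ⟩ : ∃ v : Fin n → ℝ, v = (NormedSpace.exp (T • Ap)).mulVec ζ := ⟨_, rfl⟩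
  have hDinv_z : ∀ t ∈ Set.Icc (0:ℝ) T,
      D⁻¹.mulVec (z t) = (NormedSpace.exp (t • Ap)).mulVec ζ := by
    intro t ht
    rw [hzExact t ht, Matrix.mulVec_mulVec, hIz t, ← Matrix.mulVec_mulVec, ← hζ]
  have hDinv_w : ∀ t ∈ Set.Icc (0:ℝ) T,
      D⁻¹.mulVec (w t) = (NormedSpace.exp (t • Am)).mulVec ω := by
    intro t ht
    rw [hwExact t ht, Matrix.mulVec_mulVec, hIw t, ← Matrix.mulVec_mulVec, ← hω]
  have hEsplit : ∀ t : ℝ,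
      (NormedSpace.exp (t • Ap)).mulVec ζ
        = (NormedSpace.exp ((-(T - t)) • Ap)).mulVec β := by
    intro t
    have hmul : NormedSpace.exp ((-(T - t)) • Ap) * NormedSpace.exp (T • Ap)
        = NormedSpace.exp (t • Ap) := by
      rw [← exp_smul_add18, show (-(T - t)) + T = t by ring]
    rw [hβ, Matrix.mulVec_mulVec, hmul]
  have hyform : ∀ t ∈ Set.Icc (0:ℝ) T,
      y t - ybar = (NormedSpace.exp (t • Am)).mulVec α
        + (NormedSpace.exp ((-(T - t)) • Ap)).mulVec β := by
    intro t ht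
    have h1 : z t - w t = D.mulVec (y t - ybar) := by
      rw [hzdef, hwdef, hD]
      simp only [Matrix.sub_mulVec, Matrix.mulVec_sub]
      abel
    have h2 : y t - ybar = D⁻¹.mulVec (z t) - D⁻¹.mulVec (w t) := by
      have h3 := congrArg (fun v => D⁻¹.mulVec v) h1
      rw [Matrix.mulVec_mulVec, Matrix.nonsing_inv_mul _ hDdet, Matrix.one_mulVec] at h3
      rw [← h3, Matrix.mulVec_sub]
    rw [h2, hDinv_z t ht, hDinv_w t ht, hEsplit t, hα, Matrix.mulVec_neg]
    abel
  have hlamform : ∀ t ∈ Set.Icc (0:ℝ) T,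
      lam t - lambdabar = -(P.mulVec ((NormedSpace.exp (t • Am)).mulVec α))
        - N.mulVec ((NormedSpace.exp ((-(T - t)) • Ap)).mulVec β) := by
    intro t ht
    have hz_t : z t = D.mulVec ((NormedSpace.exp ((-(T - t)) • Ap)).mulVec β) := by
      rw [← hEsplit t, ← hDinv_z t ht, Matrix.mulVec_mulVec,
        Matrix.mul_nonsing_inv _ hDdet, Matrix.one_mulVec]
    have hlam_t : lam t - lambdabar = z t - P.mulVec (y t - ybar) := by
      rw [hzdef]
      simp only [Matrix.mulVec_sub]
      abel
    rw [hlam_t, hz_t, hyform t ht, hD]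
    simp only [Matrix.sub_mulVec, Matrix.mulVec_add]
    abel
  -- boundary values
  have h0mem : (0:ℝ) ∈ Set.Icc (0:ℝ) T := ⟨le_refl _, le_of_lt hT0⟩
  have hTmem : T ∈ Set.Icc (0:ℝ) T := ⟨le_of_lt hT0, le_refl _⟩
  have hb0 : y₀ - ybar = α + (NormedSpace.exp ((-T) • Ap)).mulVec β := by
    have h := hyform 0 h0mem
    rw [hy0, zero_smul, NormedSpace.exp_zero, Matrix.one_mulVec,
      show -(T - 0) = -T by ring] at h
    exact h
  have hbT : y₁ - ybar = (NormedSpace.exp (T • Am)).mulVec α + β := by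
    have h := hyform T hTmem
    rw [hyT, show -(T - T) = (0:ℝ) by ring, zero_smul, NormedSpace.exp_zero,
      Matrix.one_mulVec] at h
    exact h
  set w₀ : Fin n → ℝ :=
    (y₀ - ybar) - (NormedSpace.exp ((-T) • Ap)).mulVec (y₁ - ybar) with hw₀
  clear_value w₀
  set vT : Fin n → ℝ :=
    (y₁ - ybar) - (NormedSpace.exp (T • Am)).mulVec (y₀ - ybar) with hvT
  clear_value vT
  have herr1 : α - w₀ = (NormedSpace.exp ((-T) • Ap)).mulVec
      ((NormedSpace.exp (T • Am)).mulVec α) := by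
    rw [hw₀, hb0, hbT]
    simp only [Matrix.mulVec_add]
    abel
  have herr2 : β - vT = (NormedSpace.exp (T • Am)).mulVec
      ((NormedSpace.exp ((-T) • Ap)).mulVec β) := by
    rw [hvT, hb0, hbT]
    simp only [Matrix.mulVec_add]
    abel
  -- norm bounds on α, β
  have habK : enorm18 α ≤ K₀ ∧ enorm18 β ≤ K₀ := by
    have h1 : enorm18 α ≤ enorm18 (y₀ - ybar) + (1/2) * enorm18 β := by
      have heq : α = (y₀ - ybar) - (NormedSpace.exp ((-T) • Ap)).mulVec β := by
        rw [hb0]; abel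
      calc enorm18 α
          = enorm18 ((y₀ - ybar) + -((NormedSpace.exp ((-T) • Ap)).mulVec β)) := by
            rw [heq, sub_eq_add_neg]
        _ ≤ enorm18 (y₀ - ybar) + enorm18 (-((NormedSpace.exp ((-T) • Ap)).mulVec β)) :=
            enorm18_add_le _ _
        _ = enorm18 (y₀ - ybar) + enorm18 ((NormedSpace.exp ((-T) • Ap)).mulVec β) := by
            rw [enorm18_neg]
        _ ≤ enorm18 (y₀ - ybar) + M * Real.exp (-ν * T) * enorm18 β := by
            have := hstabN T (le_of_lt hT0) β
            linarith
        _ ≤ enorm18 (y₀ - ybar) + (1/2) * enorm18 β := by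
            nlinarith [enorm18_nonneg β]
    have h2 : enorm18 β ≤ enorm18 (y₁ - ybar) + (1/2) * enorm18 α := by
      have heq : β = (y₁ - ybar) - (NormedSpace.exp (T • Am)).mulVec α := by
        rw [hbT]; abel
      calc enorm18 β
          = enorm18 ((y₁ - ybar) + -((NormedSpace.exp (T • Am)).mulVec α)) := by
            rw [heq, sub_eq_add_neg]
        _ ≤ enorm18 (y₁ - ybar) + enorm18 (-((NormedSpace.exp (T • Am)).mulVec α)) :=
            enorm18_add_le _ _
        _ = enorm18 (y₁ - ybar) + enorm18 ((NormedSpace.exp (T • Am)).mulVec α) := by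
            rw [enorm18_neg]
        _ ≤ enorm18 (y₁ - ybar) + M * Real.exp (-ν * T) * enorm18 α := by
            have := hstabP T (le_of_lt hT0) α
            linarith
        _ ≤ enorm18 (y₁ - ybar) + (1/2) * enorm18 α := by
            nlinarith [enorm18_nonneg α]
    constructor <;>
      · rw [hK₀]
        linarith [enorm18_nonneg α, enorm18_nonneg β]
  -- final estimates
  intro t ht
  obtain ⟨ht0, htT⟩ := ht
  have hTt0 : 0 ≤ T - t := by linarith
  have heT2 : Real.exp (-ν * T) * Real.exp (-ν * T) = Real.exp (-2 * ν * T) := by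
    rw [← Real.exp_add]; ring_nf
  have bnd1 : enorm18 ((NormedSpace.exp (t • Am)).mulVec (α - w₀))
      ≤ M ^ 3 * enorm18 α * (Real.exp (-2 * ν * T) * Real.exp (-ν * t)) := by
    have s2 := hstabN T (le_of_lt hT0) ((NormedSpace.exp (T • Am)).mulVec α)
    have s3 := hstabP T (le_of_lt hT0) α
    have e1 : M * Real.exp (-ν * t) * enorm18 ((NormedSpace.exp ((-T) • Ap)).mulVec
        ((NormedSpace.exp (T • Am)).mulVec α))
        ≤ M * Real.exp (-ν * t) * (M * Real.exp (-ν * T)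
            * (M * Real.exp (-ν * T) * enorm18 α)) := by
      have e2 : enorm18 ((NormedSpace.exp ((-T) • Ap)).mulVec
          ((NormedSpace.exp (T • Am)).mulVec α))
          ≤ M * Real.exp (-ν * T) * (M * Real.exp (-ν * T) * enorm18 α) := by
        calc enorm18 ((NormedSpace.exp ((-T) • Ap)).mulVec
              ((NormedSpace.exp (T • Am)).mulVec α))
            ≤ M * Real.exp (-ν * T) * enorm18 ((NormedSpace.exp (T • Am)).mulVec α) := s2
          _ ≤ M * Real.exp (-ν * T) * (M * Real.exp (-ν * T) * enorm18 α) := by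
              apply mul_le_mul_of_nonneg_left s3
              positivity
      apply mul_le_mul_of_nonneg_left e2
      positivity
    calc enorm18 ((NormedSpace.exp (t • Am)).mulVec (α - w₀))
        ≤ M * Real.exp (-ν * t) * enorm18 (α - w₀) := hstabP t ht0 _
      _ = M * Real.exp (-ν * t) * enorm18 ((NormedSpace.exp ((-T) • Ap)).mulVec
            ((NormedSpace.exp (T • Am)).mulVec α)) := by rw [herr1]
      _ ≤ M * Real.exp (-ν * t) * (M * Real.exp (-ν * T)
            * (M * Real.exp (-ν * T) * enorm18 α)) := e1
      _ = M ^ 3 * enorm18 α * (Real.exp (-ν * T) * Real.exp (-ν * T) * Real.exp (-ν * t)) := by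
          ring
      _ = M ^ 3 * enorm18 α * (Real.exp (-2 * ν * T) * Real.exp (-ν * t)) := by
          rw [heT2]
  have bnd2 : enorm18 ((NormedSpace.exp ((-(T - t)) • Ap)).mulVec (β - vT))
      ≤ M ^ 3 * enorm18 β * (Real.exp (-2 * ν * T) * Real.exp (-ν * (T - t))) := by
    have s2 := hstabP T (le_of_lt hT0) ((NormedSpace.exp ((-T) • Ap)).mulVec β)
    have s3 := hstabN T (le_of_lt hT0) β
    have e2 : enorm18 ((NormedSpace.exp (T • Am)).mulVec
        ((NormedSpace.exp ((-T) • Ap)).mulVec β))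
        ≤ M * Real.exp (-ν * T) * (M * Real.exp (-ν * T) * enorm18 β) := by
      calc enorm18 ((NormedSpace.exp (T • Am)).mulVec
            ((NormedSpace.exp ((-T) • Ap)).mulVec β))
          ≤ M * Real.exp (-ν * T) * enorm18 ((NormedSpace.exp ((-T) • Ap)).mulVec β) := s2
        _ ≤ M * Real.exp (-ν * T) * (M * Real.exp (-ν * T) * enorm18 β) := by
            apply mul_le_mul_of_nonneg_left s3
            positivity
    calc enorm18 ((NormedSpace.exp ((-(T - t)) • Ap)).mulVec (β - vT))
        ≤ M * Real.exp (-ν * (T - t)) * enorm18 (β - vT) := hstabN (T - t) hTt0 _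
      _ = M * Real.exp (-ν * (T - t)) * enorm18 ((NormedSpace.exp (T • Am)).mulVec
            ((NormedSpace.exp ((-T) • Ap)).mulVec β)) := by rw [herr2]
      _ ≤ M * Real.exp (-ν * (T - t)) * (M * Real.exp (-ν * T)
            * (M * Real.exp (-ν * T) * enorm18 β)) := by
          apply mul_le_mul_of_nonneg_left e2
          positivity
      _ = M ^ 3 * enorm18 β * (Real.exp (-ν * T) * Real.exp (-ν * T)
            * Real.exp (-ν * (T - t))) := by ring
      _ = M ^ 3 * enorm18 β * (Real.exp (-2 * ν * T) * Real.exp (-ν * (T - t))) := by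
          rw [heT2]
  have hM3 : (0:ℝ) < M ^ 3 := pow_pos (lt_of_lt_of_le one_pos hM) 3
  have hup1 : M ^ 3 * enorm18 α ≤ M ^ 3 * (K₀ + 1) :=
    mul_le_mul_of_nonneg_left (by linarith [habK.1]) hM3.le
  have hup2 : M ^ 3 * enorm18 β ≤ M ^ 3 * (K₀ + 1) :=
    mul_le_mul_of_nonneg_left (by linarith [habK.2]) hM3.le
  have hC1 : M ^ 3 * enorm18 α ≤ (1 + cP + cN) * M ^ 3 * (K₀ + 1) := by
    calc M ^ 3 * enorm18 α ≤ M ^ 3 * (K₀ + 1) := hup1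
      _ ≤ (1 + cP + cN) * (M ^ 3 * (K₀ + 1)) :=
        le_mul_of_one_le_left (by positivity) (by linarith)
      _ = (1 + cP + cN) * M ^ 3 * (K₀ + 1) := by ring
  have hC2 : M ^ 3 * enorm18 β ≤ (1 + cP + cN) * M ^ 3 * (K₀ + 1) := by
    calc M ^ 3 * enorm18 β ≤ M ^ 3 * (K₀ + 1) := hup2
      _ ≤ (1 + cP + cN) * (M ^ 3 * (K₀ + 1)) :=
        le_mul_of_one_le_left (by positivity) (by linarith)
      _ = (1 + cP + cN) * M ^ 3 * (K₀ + 1) := by ring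
  have hC3 : cP * (M ^ 3 * enorm18 α) ≤ (1 + cP + cN) * M ^ 3 * (K₀ + 1) := by
    calc cP * (M ^ 3 * enorm18 α) ≤ cP * (M ^ 3 * (K₀ + 1)) :=
        mul_le_mul_of_nonneg_left hup1 hcP0
      _ ≤ (1 + cP + cN) * (M ^ 3 * (K₀ + 1)) :=
        mul_le_mul_of_nonneg_right (by linarith) (by positivity)
      _ = (1 + cP + cN) * M ^ 3 * (K₀ + 1) := by ring
  have hC4 : cN * (M ^ 3 * enorm18 β) ≤ (1 + cP + cN) * M ^ 3 * (K₀ + 1) := by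
    calc cN * (M ^ 3 * enorm18 β) ≤ cN * (M ^ 3 * (K₀ + 1)) :=
        mul_le_mul_of_nonneg_left hup2 hcN0
      _ ≤ (1 + cP + cN) * (M ^ 3 * (K₀ + 1)) :=
        mul_le_mul_of_nonneg_right (by linarith) (by positivity)
      _ = (1 + cP + cN) * M ^ 3 * (K₀ + 1) := by ring
  have hexp_t : (0:ℝ) < Real.exp (-ν * t) := Real.exp_pos _
  have hexp_Tt : (0:ℝ) < Real.exp (-ν * (T - t)) := Real.exp_pos _
  have hexp_2T : (0:ℝ) < Real.exp (-2 * ν * T) := Real.exp_pos _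
  constructor
  · have hrew : y t - ybar - (NormedSpace.exp (t • Am)).mulVec w₀
        - (NormedSpace.exp ((-(T - t)) • Ap)).mulVec vT
        = (NormedSpace.exp (t • Am)).mulVec (α - w₀)
          + (NormedSpace.exp ((-(T - t)) • Ap)).mulVec (β - vT) := by
      rw [hyform t ⟨ht0, htT⟩]
      simp only [Matrix.mulVec_sub]
      abel
    rw [hrew]
    calc enorm18 ((NormedSpace.exp (t • Am)).mulVec (α - w₀)
          + (NormedSpace.exp ((-(T - t)) • Ap)).mulVec (β - vT))
        ≤ enorm18 ((NormedSpace.exp (t • Am)).mulVec (α - w₀))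
          + enorm18 ((NormedSpace.exp ((-(T - t)) • Ap)).mulVec (β - vT)) :=
          enorm18_add_le _ _
      _ ≤ M ^ 3 * enorm18 α * (Real.exp (-2 * ν * T) * Real.exp (-ν * t))
          + M ^ 3 * enorm18 β * (Real.exp (-2 * ν * T) * Real.exp (-ν * (T - t))) :=
          add_le_add bnd1 bnd2
      _ ≤ (1 + cP + cN) * M ^ 3 * (K₀ + 1) * (Real.exp (-2 * ν * T) * Real.exp (-ν * t))
          + (1 + cP + cN) * M ^ 3 * (K₀ + 1)
            * (Real.exp (-2 * ν * T) * Real.exp (-ν * (T - t))) := by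
          apply add_le_add
          · exact mul_le_mul_of_nonneg_right hC1 (by positivity)
          · exact mul_le_mul_of_nonneg_right hC2 (by positivity)
      _ = (1 + cP + cN) * M ^ 3 * (K₀ + 1) * Real.exp (-2 * ν * T)
          * (Real.exp (-ν * t) + Real.exp (-ν * (T - t))) := by ring
  · have hrew : lam t - lambdabar + P.mulVec ((NormedSpace.exp (t • Am)).mulVec w₀)
        + N.mulVec ((NormedSpace.exp ((-(T - t)) • Ap)).mulVec vT)
        = -(P.mulVec ((NormedSpace.exp (t • Am)).mulVec (α - w₀)))
          + -(N.mulVec ((NormedSpace.exp ((-(T - t)) • Ap)).mulVec (β - vT))) := by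
      rw [hlamform t ⟨ht0, htT⟩]
      simp only [Matrix.mulVec_sub]
      abel
    rw [hrew]
    calc enorm18 (-(P.mulVec ((NormedSpace.exp (t • Am)).mulVec (α - w₀)))
          + -(N.mulVec ((NormedSpace.exp ((-(T - t)) • Ap)).mulVec (β - vT))))
        ≤ enorm18 (-(P.mulVec ((NormedSpace.exp (t • Am)).mulVec (α - w₀))))
          + enorm18 (-(N.mulVec ((NormedSpace.exp ((-(T - t)) • Ap)).mulVec (β - vT)))) :=
          enorm18_add_le _ _
      _ = enorm18 (P.mulVec ((NormedSpace.exp (t • Am)).mulVec (α - w₀)))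
          + enorm18 (N.mulVec ((NormedSpace.exp ((-(T - t)) • Ap)).mulVec (β - vT))) := by
          rw [enorm18_neg, enorm18_neg]
      _ ≤ cP * enorm18 ((NormedSpace.exp (t • Am)).mulVec (α - w₀))
          + cN * enorm18 ((NormedSpace.exp ((-(T - t)) • Ap)).mulVec (β - vT)) :=
          add_le_add (hcP _) (hcN _)
      _ ≤ cP * (M ^ 3 * enorm18 α * (Real.exp (-2 * ν * T) * Real.exp (-ν * t)))
          + cN * (M ^ 3 * enorm18 β * (Real.exp (-2 * ν * T) * Real.exp (-ν * (T - t)))) :=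
          add_le_add (mul_le_mul_of_nonneg_left bnd1 hcP0)
            (mul_le_mul_of_nonneg_left bnd2 hcN0)
      _ ≤ (1 + cP + cN) * M ^ 3 * (K₀ + 1) * (Real.exp (-2 * ν * T) * Real.exp (-ν * t))
          + (1 + cP + cN) * M ^ 3 * (K₀ + 1)
            * (Real.exp (-2 * ν * T) * Real.exp (-ν * (T - t))) := by
          apply add_le_add
          · calc cP * (M ^ 3 * enorm18 α * (Real.exp (-2 * ν * T) * Real.exp (-ν * t)))
                = cP * (M ^ 3 * enorm18 α) * (Real.exp (-2 * ν * T) * Real.exp (-ν * t)) := by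
                  ring
              _ ≤ _ := mul_le_mul_of_nonneg_right hC3 (by positivity)
          · calc cN * (M ^ 3 * enorm18 β * (Real.exp (-2 * ν * T) * Real.exp (-ν * (T - t))))
                = cN * (M ^ 3 * enorm18 β)
                    * (Real.exp (-2 * ν * T) * Real.exp (-ν * (T - t))) := by ring
              _ ≤ _ := mul_le_mul_of_nonneg_right hC4 (by positivity)
      _ = (1 + cP + cN) * M ^ 3 * (K₀ + 1) * Real.exp (-2 * ν * T)
          * (Real.exp (-ν * t) + Real.exp (-ν * (T - t))) := by ring
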